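/- arXiv:2407.17092 — 2 statements merged into one kernel-verified Lean document; each statement's English description precedes it below -/
import Mathlib

section
/- Let T > 0 and let f : ℝ^d × [0,T] → ℝ^d be continuous in t and uniformly Lipschitz in x with constant L > 0. For every compact set K ⊆ ℝ^d and every ε > 0 there exist P ∈ ℕ₊ and parameters (W_i, A_i^1, A_i^2, B_i) ∈ ℝ^d × ℝ^{d×d} × ℝ^d × ℝ^d, i = 1,…,P, such that for every z₀ ∈ K, the solution z of ż(t) = f(z(t),t), z(0) = z₀, and the solution x of the SA-NODE ẋ(t) = Σ_{i=1}^P W_i ∘ Σ(A_i^1 x(t) + A_i^2 t + B_i), x(0) = z₀, satisfy sup_{t ∈ [0,T]} ‖z(t) − x(t)‖ ≤ ε, where ‖·‖ is the Euclidean norm. -/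
open MeasureTheory Set

noncomputable section

/-- `d`-dimensional Euclidean space. -/
abbrev Euc (n : ℕ) := EuclideanSpace ℝ (Fin n)

/-- The SA-NODE vector field `f_Θ(x,t) = Σ_{i=1}^P W_i ∘ ReLU(A_i^1 x + A_i^2 t + B_i)`. -/
def saNode {d P : ℕ} (W : Fin P → Euc d) (A1 : Fin P → Matrix (Fin d) (Fin d) ℝ)
    (A2 B : Fin P → Euc d) (x : Euc d) (t : ℝ) : Euc d :=
  WithLp.toLp 2 (fun j => ∑ i, W i j * max (Matrix.mulVec (A1 i) x j + A2 i j * t + B i j) 0)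


/-- 1-D piecewise-linear (ReLU-sum) approximation of a Lipschitz function. -/
lemma pl_approx (g : ℝ → ℝ) (c : ℝ) (hc : 0 ≤ c)
    (hg : ∀ a b : ℝ, |g a - g b| ≤ c * |a - b|)
    (M δ : ℝ) (hM : 0 < M) (hδ : 0 < δ) :
    ∃ (N : ℕ) (u m : ℕ → ℝ) (k0 : ℝ),
      ∀ v ∈ Icc (-M) M,
        |g v - (k0 + ∑ k ∈ Finset.range N,
          m k * (max (v - u k) 0 - max (v - u (k+1)) 0))| ≤ δ := by
  set N : ℕ := max 1 ⌈4 * c * M / δ⌉₊ with hN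
  have hN1 : 1 ≤ N := le_max_left _ _
  have hNpos : (0:ℝ) < N := by exact_mod_cast Nat.lt_of_lt_of_le Nat.zero_lt_one hN1
  set h : ℝ := 2 * M / N with hh
  have hhpos : 0 < h := by positivity
  set u : ℕ → ℝ := fun k => -M + k * h with hu
  set m : ℕ → ℝ := fun k => (g (u (k+1)) - g (u k)) / h with hm
  have humono : ∀ k : ℕ, u k ≤ u (k+1) := by
    intro k
    simp only [hu]
    have : (k:ℝ) ≤ (k+1:ℕ) := by push_cast; linarith
    nlinarith
  have hustep : ∀ k : ℕ, u (k+1) - u k = h := by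
    intro k; simp only [hu]; push_cast; ring
  have h2ch : 2 * c * h ≤ δ := by
    have h1 : 4 * c * M / δ ≤ (N:ℝ) := le_trans (Nat.le_ceil _) (by exact_mod_cast le_max_right 1 _)
    have h2 : 4 * c * M ≤ N * δ := by
      rw [div_le_iff₀ hδ] at h1; linarith
    have heq : 2 * c * h = 4 * c * M / ↑N := by rw [hh]; ring
    rw [heq, div_le_iff₀ hNpos]
    linarith
  refine ⟨N, u, m, g (u 0), fun v hv => ?_⟩
  obtain ⟨hv1, hv2⟩ := hv
  have hu0 : u 0 = -M := by simp [hu]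
  have huN : u N = M := by
    simp only [hu, hh]; field_simp; ring
  -- τ k
  set τ : ℕ → ℝ := fun k => min (max v (u k)) (u (k+1)) with hτ
  have hφ : ∀ k : ℕ, max (v - u k) 0 - max (v - u (k+1)) 0 = τ k - u k := by
    intro k
    have hk := humono k
    rcases le_total v (u k) with h1 | h1
    · have h2 : v ≤ u (k+1) := le_trans h1 hk
      rw [max_eq_right (by linarith : v - u k ≤ 0),
        max_eq_right (by linarith : v - u (k+1) ≤ 0)]
      simp only [hτ]
      rw [max_eq_right h1, min_eq_left hk]; ring
    · rcases le_total v (u (k+1)) with h2 | h2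
      · rw [max_eq_left (by linarith : 0 ≤ v - u k),
          max_eq_right (by linarith : v - u (k+1) ≤ 0)]
        simp only [hτ]
        rw [max_eq_left h1, min_eq_left h2]; ring
      · rw [max_eq_left (by linarith : 0 ≤ v - u k),
          max_eq_left (by linarith : 0 ≤ v - u (k+1))]
        simp only [hτ]
        rw [max_eq_left h1, min_eq_right h2]; ring
  have hτ_ge : ∀ k : ℕ, u k ≤ τ k := fun k =>
    le_min (le_trans (le_max_right _ _) (le_refl _)) (humono k)
  have hτ_le : ∀ k : ℕ, τ k ≤ u (k+1) := fun k => min_le_right _ _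
  -- telescoping identity
  have htel : ∑ k ∈ Finset.range N, (g (τ k) - g (u k)) = g v - g (u 0) := by
    have key : ∀ k : ℕ, g (τ k) - g (u k) = g (min v (u (k+1))) - g (min v (u k)) := by
      intro k
      rcases le_total v (u k) with h1 | h1
      · have hτk : τ k = u k := by
          simp only [hτ]; rw [max_eq_right h1, min_eq_left (humono k)]
        rw [hτk, min_eq_left h1, min_eq_left (le_trans h1 (humono k))]
        ring
      · have : τ k = min v (u (k+1)) := by simp [hτ, max_eq_left h1]
        rw [this, min_eq_right h1]
    calc ∑ k ∈ Finset.range N, (g (τ k) - g (u k))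
        = ∑ k ∈ Finset.range N, ((fun k => g (min v (u k))) (k+1) - (fun k => g (min v (u k))) k) := by
          exact Finset.sum_congr rfl fun k _ => key k
      _ = g (min v (u N)) - g (min v (u 0)) := by
          simpa using Finset.sum_range_sub (fun k => g (min v (u k))) N
      _ = g v - g (u 0) := by rw [min_eq_left (by rw [huN]; exact hv2), min_eq_right (by rw [hu0]; exact hv1)]
  -- error terms
  set e : ℕ → ℝ := fun k => (g (τ k) - g (u k)) - m k * (τ k - u k) with he
  have herr : g v - (g (u 0) + ∑ k ∈ Finset.range N,
      m k * (max (v - u k) 0 - max (v - u (k+1)) 0)) = ∑ k ∈ Finset.range N, e k := by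
    have h5 : ∑ k ∈ Finset.range N, m k * (max (v - u k) 0 - max (v - u (k+1)) 0)
        = ∑ k ∈ Finset.range N, m k * (τ k - u k) :=
      Finset.sum_congr rfl fun k _ => by rw [hφ k]
    have h4 : ∑ k ∈ Finset.range N, e k
        = (g v - g (u 0)) - ∑ k ∈ Finset.range N, m k * (τ k - u k) := by
      rw [← htel, ← Finset.sum_sub_distrib]
    rw [h5, h4]; ring
  rw [herr]
  -- the single nonzero term
  set k0 : ℕ := ⌊(v + M) / h⌋₊ with hk0
  have hvM : 0 ≤ v + M := by linarith
  have hzero : ∀ k ∈ Finset.range N, k ≠ k0 → e k = 0 := by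
    intro k _ hk
    rcases lt_or_gt_of_ne hk with hlt | hgt
    · -- k < k0 : u (k+1) ≤ v, τ k = u (k+1)
      have : ((k:ℝ)+1) ≤ k0 := by exact_mod_cast hlt
      have hfl : (k0:ℝ) ≤ (v + M) / h := Nat.floor_le (by positivity)
      have hle : u (k+1) ≤ v := by
        have : ((k:ℝ)+1) * h ≤ v + M := by
          calc ((k:ℝ)+1) * h ≤ k0 * h := by nlinarith
            _ ≤ v + M := by rw [← div_mul_cancel₀ (v+M) (ne_of_gt hhpos)]; nlinarith [hfl]
        simp only [hu]; push_cast; linarith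
      have hτk : τ k = u (k+1) := by
        rw [hτ]
        simp only
        rw [max_eq_left (le_trans (humono k) hle), min_eq_right hle]
      rw [he]; simp only
      rw [hτk, hustep k, hm]
      field_simp
      ring
    · -- k0 < k : v < u k, τ k = u k
      have hflt : (v + M) / h < k0 + 1 := Nat.lt_floor_add_one _
      have : ((k0:ℝ)+1) ≤ k := by exact_mod_cast hgt
      have hge : v < u k := by
        have h1 : v + M < ((k0:ℝ)+1) * h := by
          rw [div_lt_iff₀ hhpos] at hflt; linarith
        have h2 : ((k0:ℝ)+1) * h ≤ k * h := by nlinarith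
        simp only [hu]; linarith
      have hτk : τ k = u k := by
        rw [hτ]; simp only
        rw [max_eq_right hge.le, min_eq_left (humono k)]
      rw [he]; simp only [hτk]; ring
  have hbound : |∑ k ∈ Finset.range N, e k| ≤ δ := by
    by_cases hk0N : k0 ∈ Finset.range N
    · rw [Finset.sum_eq_single_of_mem k0 hk0N hzero]
      have h1 : |g (τ k0) - g (u k0)| ≤ c * h := by
        refine le_trans (hg _ _) ?_
        have : |τ k0 - u k0| ≤ h := by
          rw [abs_le]; constructor
          · linarith [hτ_ge k0, hhpos]
          · have := hτ_le k0; have := hustep k0; linarith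
        nlinarith
      have h2 : |m k0| ≤ c := by
        rw [hm]; simp only
        rw [abs_div, abs_of_pos hhpos, div_le_iff₀ hhpos]
        refine le_trans (hg _ _) ?_
        have : |u (k0+1) - u k0| = h := by rw [hustep k0, abs_of_pos hhpos]
        rw [this]
      have h3 : |τ k0 - u k0| ≤ h := by
        rw [abs_le]; constructor
        · linarith [hτ_ge k0, hhpos]
        · have := hτ_le k0; have := hustep k0; linarith
      rw [he]; simp only
      calc |g (τ k0) - g (u k0) - m k0 * (τ k0 - u k0)|
          ≤ |g (τ k0) - g (u k0)| + |m k0 * (τ k0 - u k0)| := abs_sub _ _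
        _ ≤ c * h + c * h := by
            refine add_le_add h1 ?_
            rw [abs_mul]
            have := abs_nonneg (m k0)
            nlinarith
        _ = 2 * c * h := by ring
        _ ≤ δ := h2ch
    · rw [Finset.sum_eq_zero (fun k hk => hzero k hk (by rintro rfl; exact hk0N hk))]
      simpa using hδ.le
  exact hbound


/-- Affine functional on `Euc d × ℝ`. -/
def linF {d : ℕ} (a : Euc d) (c b : ℝ) (p : Euc d × ℝ) : ℝ :=
  (∑ j, a j * p.1 j) + c * p.2 + b

/-- ReLU-of-affine generators. -/
def Gen (d : ℕ) : Set ((Euc d × ℝ) → ℝ) :=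
  {F | ∃ (a : Euc d) (c b : ℝ), F = fun p => max (linF a c b p) 0}

lemma cos_lip : ∀ a b : ℝ, |Real.cos a - Real.cos b| ≤ 1 * |a - b| := by
  intro a b
  rw [Real.cos_sub_cos, one_mul]
  rw [abs_mul, abs_mul]
  have h1 : |Real.sin ((a+b)/2)| ≤ 1 := Real.abs_sin_le_one _
  have h2 : |Real.sin ((a-b)/2)| ≤ |(a-b)/2| := Real.abs_sin_le_abs
  have h3 : |(a-b)/2| = |a-b|/2 := by rw [abs_div]; norm_num
  have h4 : |(-2 : ℝ)| = 2 := by norm_num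
  rw [h3] at h2
  rw [h4]
  nlinarith [abs_nonneg (Real.sin ((a-b)/2)), abs_nonneg (a-b), abs_nonneg (Real.sin ((a+b)/2))]

lemma linF_continuous {d : ℕ} (a : Euc d) (c b : ℝ) :
    Continuous (linF a c b) := by
  have h1 : (fun p : Euc d × ℝ => ∑ j, a j * p.1 j)
      = fun p : Euc d × ℝ => (inner ℝ a p.1 : ℝ) := by
    funext p
    rw [PiLp.inner_apply]
    simp [RCLike.inner_apply, conj_trivial]
    exact Finset.sum_congr rfl fun _ _ => mul_comm _ _
  unfold linF
  apply Continuous.add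
  apply Continuous.add
  · rw [h1]
    exact Continuous.inner continuous_const continuous_fst
  · exact continuous_const.mul continuous_snd
  · exact continuous_const

/-- Approximation of `cos ∘ affine` by elements of the span of ReLU generators,
uniformly on a set where the affine functional is bounded. -/
lemma cos_relu {d : ℕ} (Q : Set (Euc d × ℝ)) (a : Euc d) (cc bb : ℝ)
    (M0 : ℝ) (hM0 : ∀ p ∈ Q, |linF a cc bb p| ≤ M0)
    (δ : ℝ) (hδ : 0 < δ) :
    ∃ F ∈ Submodule.span ℝ (Gen d), ∀ p ∈ Q, |Real.cos (linF a cc bb p) - F p| ≤ δ := by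
  set M : ℝ := max M0 1 with hM
  have hMpos : (0:ℝ) < M := lt_of_lt_of_le one_pos (le_max_right _ _)
  obtain ⟨N, u, m, k0, hpl⟩ := pl_approx Real.cos 1 one_pos.le cos_lip M δ hMpos hδ
  refine ⟨fun p => k0 + ∑ k ∈ Finset.range N,
      m k * (max (linF a cc bb p - u k) 0 - max (linF a cc bb p - u (k+1)) 0), ?_, ?_⟩
  · -- membership in the span
    have hconst : (fun _ : Euc d × ℝ => k0) ∈ Submodule.span ℝ (Gen d) := by
      have hgen : (fun p : Euc d × ℝ => max (linF (0 : Euc d) 0 1 p) 0) ∈ Gen d :=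
        ⟨0, 0, 1, rfl⟩
      have h1 : (fun _ : Euc d × ℝ => k0)
          = k0 • (fun p : Euc d × ℝ => max (linF (0 : Euc d) 0 1 p) 0) := by
        funext p
        simp [linF]
      rw [h1]
      exact Submodule.smul_mem _ _ (Submodule.subset_span hgen)
    have hshift : ∀ r : ℝ, (fun p : Euc d × ℝ => max (linF a cc bb p - r) 0)
        ∈ Submodule.span ℝ (Gen d) := by
      intro r
      refine Submodule.subset_span ⟨a, cc, bb - r, ?_⟩
      funext p
      simp [linF]; ring_nf
    have hterm : ∀ k : ℕ, (fun p : Euc d × ℝ =>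
        m k * (max (linF a cc bb p - u k) 0 - max (linF a cc bb p - u (k+1)) 0))
        ∈ Submodule.span ℝ (Gen d) := by
      intro k
      have : (fun p : Euc d × ℝ =>
          m k * (max (linF a cc bb p - u k) 0 - max (linF a cc bb p - u (k+1)) 0))
          = m k • ((fun p : Euc d × ℝ => max (linF a cc bb p - u k) 0)
            - fun p : Euc d × ℝ => max (linF a cc bb p - u (k+1)) 0) := by
        funext p; simp [mul_sub]
      rw [this]
      exact Submodule.smul_mem _ _ (Submodule.sub_mem _ (hshift _) (hshift _))
    have htot : (fun p : Euc d × ℝ => k0 + ∑ k ∈ Finset.range N,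
        m k * (max (linF a cc bb p - u k) 0 - max (linF a cc bb p - u (k+1)) 0))
        = (fun _ : Euc d × ℝ => k0) + ∑ k ∈ Finset.range N, (fun p : Euc d × ℝ =>
          m k * (max (linF a cc bb p - u k) 0 - max (linF a cc bb p - u (k+1)) 0)) := by
      funext p
      simp [Finset.sum_apply]
    rw [htot]
    exact Submodule.add_mem _ hconst (Submodule.sum_mem _ fun k _ => hterm k)
  · intro p hp
    have hv : linF a cc bb p ∈ Icc (-M) M := by
      have := hM0 p hp
      have habs : |linF a cc bb p| ≤ M := le_trans this (le_max_left _ _)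
      rw [abs_le] at habs
      exact ⟨habs.1, habs.2⟩
    exact hpl _ hv

/-- A bundled `cos ∘ affine` map on a subset. -/
def mkcos {d : ℕ} (Q : Set (Euc d × ℝ)) (a : Euc d) (c b : ℝ) : C(Q, ℝ) :=
  ⟨fun q => Real.cos (linF a c b (q : Euc d × ℝ)),
    Real.continuous_cos.comp ((linF_continuous a c b).comp continuous_subtype_val)⟩

lemma mkcos_mul {d : ℕ} (Q : Set (Euc d × ℝ)) (a a' : Euc d) (c c' b b' : ℝ) :
    mkcos Q a c b * mkcos Q a' c' b' =
      (1/2 : ℝ) • mkcos Q (a + a') (c + c') (b + b')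
      + (1/2 : ℝ) • mkcos Q (a - a') (c - c') (b - b') := by
  ext q
  have hadd : linF (a + a') (c + c') (b + b') (q : Euc d × ℝ)
      = linF a c b q + linF a' c' b' q := by
    simp only [linF, PiLp.add_apply, add_mul, Finset.sum_add_distrib]
    ring
  have hsub : linF (a - a') (c - c') (b - b') (q : Euc d × ℝ)
      = linF a c b q - linF a' c' b' q := by
    simp only [linF, PiLp.sub_apply, sub_mul, Finset.sum_sub_distrib]
    ring
  simp only [ContinuousMap.mul_apply, ContinuousMap.add_apply, ContinuousMap.smul_apply,
    mkcos, ContinuousMap.coe_mk, smul_eq_mul, hadd, hsub]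
  rw [Real.cos_add, Real.cos_sub]
  ring

/-- Scalar Stone-Weierstrass approximation by the span of ReLU generators. -/
lemma scalar_approx {d : ℕ} (Q : Set (Euc d × ℝ)) (hQ : IsCompact Q)
    (G : Euc d × ℝ → ℝ) (hG : ContinuousOn G Q) (δ : ℝ) (hδ : 0 < δ) :
    ∃ F ∈ Submodule.span ℝ (Gen d), ∀ p ∈ Q, |G p - F p| ≤ δ := by
  rcases Q.eq_empty_or_nonempty with rfl | hne
  · exact ⟨0, Submodule.zero_mem _, by simp⟩
  haveI : CompactSpace Q := isCompact_iff_compactSpace.mp hQ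
  set S : Set C(Q, ℝ) := {φ | ∃ (a : Euc d) (c b : ℝ), φ = mkcos Q a c b} with hS
  -- span S is a subalgebra
  have hone : (1 : C(Q, ℝ)) ∈ Submodule.span ℝ S := by
    refine Submodule.subset_span ⟨0, 0, 0, ?_⟩
    ext q
    simp [mkcos, linF]
  have hmulS : ∀ φ₁ ∈ S, ∀ φ₂ ∈ S, φ₁ * φ₂ ∈ Submodule.span ℝ S := by
    rintro _ ⟨a, c, b, rfl⟩ _ ⟨a', c', b', rfl⟩
    rw [mkcos_mul]
    exact Submodule.add_mem _
      (Submodule.smul_mem _ _ (Submodule.subset_span ⟨_, _, _, rfl⟩))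
      (Submodule.smul_mem _ _ (Submodule.subset_span ⟨_, _, _, rfl⟩))
  have hstep : ∀ φ ∈ S, ∀ y ∈ Submodule.span ℝ S, φ * y ∈ Submodule.span ℝ S := by
    intro φ hφ y hy
    induction hy using Submodule.span_induction with
    | mem ψ hψ => exact hmulS _ hφ _ hψ
    | zero => rw [mul_zero]; exact Submodule.zero_mem _
    | add y₁ y₂ _ _ h1 h2 => rw [mul_add]; exact Submodule.add_mem _ h1 h2
    | smul r y₁ _ h1 => rw [mul_smul_comm]; exact Submodule.smul_mem _ _ h1
  have hmul : ∀ x y : C(Q, ℝ), x ∈ Submodule.span ℝ S → y ∈ Submodule.span ℝ S →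
      x * y ∈ Submodule.span ℝ S := by
    intro x y hx hy
    induction hx using Submodule.span_induction with
    | mem φ hφ => exact hstep _ hφ _ hy
    | zero => rw [zero_mul]; exact Submodule.zero_mem _
    | add x₁ x₂ _ _ h1 h2 => rw [add_mul]; exact Submodule.add_mem _ h1 h2
    | smul r x₁ _ h1 => rw [smul_mul_assoc]; exact Submodule.smul_mem _ _ h1
  set A : Subalgebra ℝ C(Q, ℝ) := (Submodule.span ℝ S).toSubalgebra hone hmul with hA
  -- A separates points
  have hsep : A.SeparatesPoints := by
    intro q q' hqq'
    have hp : (q : Euc d × ℝ) ≠ (q' : Euc d × ℝ) := fun h => hqq' (Subtype.ext h)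
    have key : ∃ (a : Euc d) (c b : ℝ),
        Real.cos (linF a c b (q : Euc d × ℝ)) ≠ Real.cos (linF a c b (q' : Euc d × ℝ)) := by
      by_cases h1 : (q : Euc d × ℝ).1 = (q' : Euc d × ℝ).1
      · -- second coordinates differ
        have h2 : (q : Euc d × ℝ).2 ≠ (q' : Euc d × ℝ).2 := by
          intro h2; exact hp (Prod.ext h1 h2)
        set D : ℝ := (q : Euc d × ℝ).2 - (q' : Euc d × ℝ).2 with hD
        have hDne : D ≠ 0 := sub_ne_zero.mpr h2
        refine ⟨0, Real.pi / D, -(Real.pi / D) * (q' : Euc d × ℝ).2, ?_⟩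
        have e1 : linF (0 : Euc d) (Real.pi / D) (-(Real.pi / D) * (q' : Euc d × ℝ).2)
            (q : Euc d × ℝ) = Real.pi := by
          simp only [linF]
          have hz : ∑ j, (0 : Euc d) j * (q : Euc d × ℝ).1 j = 0 := by simp
          rw [hz, hD]
          field_simp
          ring
        have e2 : linF (0 : Euc d) (Real.pi / D) (-(Real.pi / D) * (q' : Euc d × ℝ).2)
            (q' : Euc d × ℝ) = 0 := by
          simp only [linF]
          have hz : ∑ j, (0 : Euc d) j * (q' : Euc d × ℝ).1 j = 0 := by simp
          rw [hz]
          ring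
        rw [e1, e2, Real.cos_pi, Real.cos_zero]
        norm_num
      · -- first coordinates differ in some index j
        have h2 : ∃ j, (q : Euc d × ℝ).1 j ≠ (q' : Euc d × ℝ).1 j := by
          by_contra hcon
          push_neg at hcon
          exact h1 (PiLp.ext hcon)
        obtain ⟨j, hj⟩ := h2
        set D : ℝ := (q : Euc d × ℝ).1 j - (q' : Euc d × ℝ).1 j with hD
        have hDne : D ≠ 0 := sub_ne_zero.mpr hj
        set a : Euc d := WithLp.toLp 2 (fun i => if i = j then Real.pi / D else 0) with ha
        have hlin : ∀ r : Euc d × ℝ, linF a 0 (-(Real.pi / D) * (q' : Euc d × ℝ).1 j) r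
            = Real.pi / D * r.1 j - Real.pi / D * (q' : Euc d × ℝ).1 j := by
          intro r
          simp only [linF, ha]
          rw [Finset.sum_eq_single j]
          · simp; ring
          · intro i _ hij; simp [hij]
          · intro hj'; exact absurd (Finset.mem_univ j) hj'
        refine ⟨a, 0, -(Real.pi / D) * (q' : Euc d × ℝ).1 j, ?_⟩
        rw [hlin, hlin]
        have e1 : Real.pi / D * (q : Euc d × ℝ).1 j - Real.pi / D * (q' : Euc d × ℝ).1 j
            = Real.pi := by field_simp; ring
        rw [e1]
        have : Real.pi / D * (q' : Euc d × ℝ).1 j - Real.pi / D * (q' : Euc d × ℝ).1 j = 0 := by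
          ring
        rw [this, Real.cos_pi, Real.cos_zero]
        norm_num
    obtain ⟨a, c, b, hab⟩ := key
    exact ⟨_, ⟨mkcos Q a c b, Submodule.subset_span ⟨a, c, b, rfl⟩, rfl⟩, hab⟩
  -- Stone-Weierstrass
  obtain ⟨g, hgnear⟩ := ContinuousMap.exists_mem_subalgebra_near_continuous_of_separatesPoints
    A hsep (Q.restrict G) (ContinuousOn.restrict hG) (δ/2) (by positivity)
  have hgspan : (g : C(Q, ℝ)) ∈ Submodule.span ℝ S := g.2
  -- representation as finite linear combination
  obtain ⟨n, r, ψ, hrep⟩ := Submodule.mem_span_set'.mp hgspan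
  -- choose parameters for each ψ i
  have hchoice : ∀ i : Fin n, ∃ (a : Euc d) (c b : ℝ), (ψ i : C(Q, ℝ)) = mkcos Q a c b :=
    fun i => (ψ i).2
  choose aa cc bb hψ using hchoice
  set Wt : ℝ := ∑ i, |r i| + 1 with hWt
  have hWtpos : 0 < Wt := by
    have : (0:ℝ) ≤ ∑ i, |r i| := Finset.sum_nonneg fun i _ => abs_nonneg _
    linarith
  -- bound each affine functional on Q
  have hbnd : ∀ i : Fin n, ∃ M0 : ℝ, ∀ p ∈ Q, |linF (aa i) (cc i) (bb i) p| ≤ M0 := by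
    intro i
    obtain ⟨C, hC⟩ := hQ.exists_bound_of_continuousOn (linF_continuous (aa i) (cc i) (bb i)).continuousOn
    exact ⟨C, fun p hp => by simpa using hC p hp⟩
  choose M0 hM0 using hbnd
  -- approximate each cosine by a ReLU combination
  have happrox : ∀ i : Fin n, ∃ F ∈ Submodule.span ℝ (Gen d),
      ∀ p ∈ Q, |Real.cos (linF (aa i) (cc i) (bb i) p) - F p| ≤ δ / (2 * Wt) :=
    fun i => cos_relu Q (aa i) (cc i) (bb i) (M0 i) (hM0 i) _ (by positivity)
  choose FF hFFmem hFFnear using happrox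
  refine ⟨fun p => ∑ i, r i * FF i p, ?_, ?_⟩
  · have : (fun p => ∑ i, r i * FF i p) = ∑ i, r i • FF i := by
      funext p
      simp [Finset.sum_apply]
    rw [this]
    exact Submodule.sum_mem _ fun i _ => Submodule.smul_mem _ _ (hFFmem i)
  · intro p hp
    have hg_eval : (g : C(Q, ℝ)) ⟨p, hp⟩ = ∑ i, r i * Real.cos (linF (aa i) (cc i) (bb i) p) := by
      rw [← hrep]
      simp only [ContinuousMap.coe_sum, Finset.sum_apply, ContinuousMap.coe_smul, Pi.smul_apply,
        smul_eq_mul]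
      apply Finset.sum_congr rfl
      intro i _
      rw [hψ i]
      rfl
    have h1 : |G p - (g : C(Q, ℝ)) ⟨p, hp⟩| ≤ δ/2 := by
      have := hgnear ⟨p, hp⟩
      rw [Real.norm_eq_abs] at this
      rw [abs_sub_comm]
      exact le_of_lt this
    have h2 : |(g : C(Q, ℝ)) ⟨p, hp⟩ - ∑ i, r i * FF i p| ≤ δ/2 := by
      rw [hg_eval, ← Finset.sum_sub_distrib]
      refine le_trans (Finset.abs_sum_le_sum_abs _ _) ?_
      have hterm : ∀ i : Fin n, |r i * Real.cos (linF (aa i) (cc i) (bb i) p) - r i * FF i p|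
          ≤ |r i| * (δ / (2 * Wt)) := by
        intro i
        rw [← mul_sub, abs_mul]
        exact mul_le_mul_of_nonneg_left (hFFnear i p hp) (abs_nonneg _)
      refine le_trans (Finset.sum_le_sum fun i _ => hterm i) ?_
      rw [← Finset.sum_mul]
      have hle : ∑ i, |r i| ≤ Wt := by rw [hWt]; linarith
      calc (∑ i, |r i|) * (δ / (2 * Wt)) ≤ Wt * (δ / (2 * Wt)) := by
            apply mul_le_mul_of_nonneg_right hle; positivity
        _ = δ/2 := by field_simp
    calc |G p - ∑ i, r i * FF i p|
        ≤ |G p - (g : C(Q, ℝ)) ⟨p, hp⟩| + |(g : C(Q, ℝ)) ⟨p, hp⟩ - ∑ i, r i * FF i p| :=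
          abs_sub_le _ _ _
      _ ≤ δ/2 + δ/2 := add_le_add h1 h2
      _ = δ := by ring

/-- Vector-valued uniform approximation by an SA-NODE vector field. -/
lemma net_approx {d : ℕ} (Q : Set (Euc d × ℝ)) (hQ : IsCompact Q)
    (g : Euc d × ℝ → Euc d) (hg : ∀ j : Fin d, ContinuousOn (fun p => g p j) Q)
    (δ : ℝ) (hδ : 0 < δ) :
    ∃ P : ℕ, 0 < P ∧
      ∃ (W : Fin P → Euc d) (A1 : Fin P → Matrix (Fin d) (Fin d) ℝ) (A2 B : Fin P → Euc d),
        ∀ p ∈ Q, ‖g p - saNode W A1 A2 B p.1 p.2‖ ≤ δ := by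
  set δ' : ℝ := δ / (d + 1) with hδ'def
  have hδ' : 0 < δ' := by positivity
  have happ : ∀ j : Fin d, ∃ F ∈ Submodule.span ℝ (Gen d),
      ∀ p ∈ Q, |g p j - F p| ≤ δ' :=
    fun j => scalar_approx Q hQ _ (hg j) δ' hδ'
  choose F hFmem hFerr using happ
  have hrep : ∀ j : Fin d, ∃ (nj : ℕ) (r : Fin nj → ℝ) (ψ : Fin nj → Gen d),
      ∑ i, r i • (ψ i : (Euc d × ℝ) → ℝ) = F j :=
    fun j => Submodule.mem_span_set'.mp (hFmem j)
  choose nn rr ψψ hψsum using hrep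
  have hparams : ∀ (j : Fin d) (i : Fin (nn j)), ∃ (a : Euc d) (c b : ℝ),
      (ψψ j i : (Euc d × ℝ) → ℝ) = fun p => max (linF a c b p) 0 :=
    fun j i => (ψψ j i).2
  choose aa cc bb hab using hparams
  -- padding
  set n : ℕ := (Finset.univ.sup nn) + 1 with hn
  have hnle : ∀ j : Fin d, nn j ≤ n :=
    fun j => le_trans (Finset.le_sup (Finset.mem_univ j)) (Nat.le_succ _)
  set wpad : Fin d → ℕ → ℝ := fun j i => if h : i < nn j then rr j ⟨i, h⟩ else 0 with hwpad
  set apad : Fin d → ℕ → Euc d := fun j i => if h : i < nn j then aa j ⟨i, h⟩ else 0 with hapad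
  set cpad : Fin d → ℕ → ℝ := fun j i => if h : i < nn j then cc j ⟨i, h⟩ else 0 with hcpad
  set bpad : Fin d → ℕ → ℝ := fun j i => if h : i < nn j then bb j ⟨i, h⟩ else 0 with hbpad
  have hFj : ∀ (j : Fin d) (p : Euc d × ℝ), F j p
      = ∑ i ∈ Finset.range n, wpad j i * max (linF (apad j i) (cpad j i) (bpad j i) p) 0 := by
    intro j p
    rw [← hψsum j]
    have h1 : ∑ i ∈ Finset.range n, wpad j i * max (linF (apad j i) (cpad j i) (bpad j i) p) 0
        = ∑ i ∈ Finset.range (nn j), wpad j i * max (linF (apad j i) (cpad j i) (bpad j i) p) 0 := by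
      refine (Finset.sum_subset (Finset.range_subset_range.mpr (hnle j)) ?_).symm
      intro i _ hi
      rw [Finset.mem_range, not_lt] at hi
      have : ¬ i < nn j := not_lt.mpr hi
      simp [hwpad, this]
    rw [h1, ← Fin.sum_univ_eq_sum_range
      (fun i => wpad j i * max (linF (apad j i) (cpad j i) (bpad j i) p) 0) (nn j)]
    simp only [Finset.sum_apply, Pi.smul_apply, smul_eq_mul]
    apply Finset.sum_congr rfl
    intro i _
    have hi : (i : ℕ) < nn j := i.isLt
    simp only [hwpad, hapad, hcpad, hbpad, dif_pos hi, Fin.eta]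
    rw [hab j i]
  -- assemble the network
  set e : Fin d × Fin n ≃ Fin (d * n) := finProdFinEquiv with he
  refine ⟨d * n + 1, Nat.succ_pos _, ?_⟩
  set Wq : Fin d × Fin n → Euc d :=
    fun q => WithLp.toLp 2 (fun j => if j = q.1 then wpad q.1 q.2 else 0 : Fin d → ℝ) with hWq
  set A1q : Fin d × Fin n → Matrix (Fin d) (Fin d) ℝ :=
    fun q => Matrix.of (fun _ k => apad q.1 q.2 k) with hA1q
  set A2q : Fin d × Fin n → Euc d := fun q => WithLp.toLp 2 (fun _ => cpad q.1 q.2 : Fin d → ℝ) with hA2q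
  set Bq : Fin d × Fin n → Euc d := fun q => WithLp.toLp 2 (fun _ => bpad q.1 q.2 : Fin d → ℝ) with hBq
  set Wp : Fin (d * n + 1) → Euc d :=
    fun i => if h : (i : ℕ) < d * n then Wq (e.symm ⟨i, h⟩) else 0 with hWp
  set A1p : Fin (d * n + 1) → Matrix (Fin d) (Fin d) ℝ :=
    fun i => if h : (i : ℕ) < d * n then A1q (e.symm ⟨i, h⟩) else 0 with hA1p
  set A2p : Fin (d * n + 1) → Euc d :=
    fun i => if h : (i : ℕ) < d * n then A2q (e.symm ⟨i, h⟩) else 0 with hA2p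
  set Bp : Fin (d * n + 1) → Euc d :=
    fun i => if h : (i : ℕ) < d * n then Bq (e.symm ⟨i, h⟩) else 0 with hBp
  refine ⟨Wp, A1p, A2p, Bp, ?_⟩
  intro p hp
  -- evaluate the network coordinatewise
  have hnet : ∀ j : Fin d, saNode Wp A1p A2p Bp p.1 p.2 j = F j p := by
    intro j
    unfold saNode
    rw [PiLp.toLp_apply]
    rw [Fin.sum_univ_castSucc]
    have hlast : Wp (Fin.last (d*n)) j *
        max ((Matrix.mulVec (A1p (Fin.last (d*n))) p.1) j
          + A2p (Fin.last (d*n)) j * p.2 + Bp (Fin.last (d*n)) j) 0 = 0 := by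
      have hnl : ¬ ((Fin.last (d*n) : Fin (d*n+1)) : ℕ) < d * n := by
        simp [Fin.last]
      simp only [hWp, dif_neg hnl]
      simp
    rw [hlast, add_zero]
    have hstep : ∀ i : Fin (d * n),
        Wp i.castSucc j * max ((Matrix.mulVec (A1p i.castSucc) p.1) j
          + A2p i.castSucc j * p.2 + Bp i.castSucc j) 0
        = (fun q : Fin d × Fin n => Wq q j *
            max ((∑ k, apad q.1 q.2 k * p.1 k) + cpad q.1 q.2 * p.2 + bpad q.1 q.2) 0)
          (e.symm i) := by
      intro i
      have hi : ((i.castSucc : Fin (d*n+1)) : ℕ) < d * n := i.isLt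
      simp only [hWp, hA1p, hA2p, hBp, dif_pos hi]
      have hfin : (⟨((i.castSucc : Fin (d*n+1)) : ℕ), hi⟩ : Fin (d*n)) = i := Fin.ext rfl
      rw [hfin]
      simp [hA1q, hA2q, hBq, Matrix.mulVec, dotProduct]
    refine (Finset.sum_congr rfl fun i _ => hstep i).trans
      ((Equiv.sum_comp e.symm (fun q : Fin d × Fin n => Wq q j *
        max ((∑ k, apad q.1 q.2 k * p.1 k) + cpad q.1 q.2 * p.2 + bpad q.1 q.2) 0)).trans ?_)
    show ∑ q : Fin d × Fin n, Wq q j *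
        max ((∑ k, apad q.1 q.2 k * p.1 k) + cpad q.1 q.2 * p.2 + bpad q.1 q.2) 0 = F j p
    rw [Fintype.sum_prod_type]
    have hq1 : ∀ q1 : Fin d, ∀ q2 : Fin n,
        Wq (q1, q2) j * max ((∑ k, apad q1 q2 k * p.1 k) + cpad q1 q2 * p.2 + bpad q1 q2) 0
        = if j = q1 then wpad q1 q2 *
            max ((∑ k, apad q1 q2 k * p.1 k) + cpad q1 q2 * p.2 + bpad q1 q2) 0 else 0 := by
      intro q1 q2
      have hW : Wq (q1, q2) j = if j = q1 then wpad q1 q2 else 0 := rfl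
      rw [hW]
      by_cases hjq : j = q1
      · rw [if_pos hjq, if_pos hjq]
      · rw [if_neg hjq, if_neg hjq, zero_mul]
    simp only [hq1]
    rw [Finset.sum_comm]
    have hsum1 : ∀ q2 : Fin n, ∑ q1 : Fin d, (if j = q1 then wpad q1 q2 *
        max ((∑ k, apad q1 q2 k * p.1 k) + cpad q1 q2 * p.2 + bpad q1 q2) 0 else 0)
        = wpad j q2 * max ((∑ k, apad j q2 k * p.1 k) + cpad j q2 * p.2 + bpad j q2) 0 := by
      intro q2
      rw [Finset.sum_ite_eq]
      simp
    simp only [hsum1]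
    rw [hFj j p, ← Fin.sum_univ_eq_sum_range
      (fun i => wpad j i * max (linF (apad j i) (cpad j i) (bpad j i) p) 0) n]
    apply Finset.sum_congr rfl
    intro q2 _
    simp [linF]
  -- final norm bound
  have hcoord : ∀ j : Fin d, |(g p - saNode Wp A1p A2p Bp p.1 p.2) j| ≤ δ' := by
    intro j
    rw [PiLp.sub_apply, hnet j]
    exact hFerr j p hp
  rw [EuclideanSpace.norm_eq]
  have hsum : ∑ j, ‖(g p - saNode Wp A1p A2p Bp p.1 p.2) j‖ ^ 2 ≤ (d : ℝ) * δ' ^ 2 := by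
    calc ∑ j, ‖(g p - saNode Wp A1p A2p Bp p.1 p.2) j‖ ^ 2
        ≤ ∑ _j : Fin d, δ' ^ 2 := by
          apply Finset.sum_le_sum
          intro j _
          have := hcoord j
          rw [Real.norm_eq_abs]
          nlinarith [abs_nonneg ((g p - saNode Wp A1p A2p Bp p.1 p.2) j)]
      _ = (d : ℝ) * δ' ^ 2 := by rw [Finset.sum_const]; simp [mul_comm]
  have hlt : (d : ℝ) * δ' ^ 2 ≤ δ ^ 2 := by
    rw [hδ'def]
    rw [div_pow]
    rw [mul_div_assoc']
    rw [div_le_iff₀ (by positivity)]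
    have h1 : (d : ℝ) ≤ ((d : ℝ) + 1) ^ 2 := by nlinarith [Nat.cast_nonneg (α := ℝ) d]
    nlinarith [sq_nonneg δ, hδ.le]
  calc Real.sqrt (∑ j, ‖(g p - saNode Wp A1p A2p Bp p.1 p.2) j‖ ^ 2)
      ≤ Real.sqrt (δ ^ 2) := Real.sqrt_le_sqrt (le_trans hsum hlt)
    _ = δ := Real.sqrt_sq hδ.le

lemma f_jointly_continuous {d : ℕ} {T : ℝ} (f : Euc d → ℝ → Euc d) (L : ℝ)
    (hcont : ∀ x, ContinuousOn (f x) (Icc 0 T))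
    (hlip : ∀ x y : Euc d, ∀ t ∈ Icc (0:ℝ) T, ‖f x t - f y t‖ ≤ L * ‖x - y‖) :
    ContinuousOn (fun p : Euc d × ℝ => f p.1 p.2) (univ ×ˢ Icc 0 T) := by
  intro p hp
  have hp2 : p.2 ∈ Icc (0:ℝ) T := (mem_prod.mp hp).2
  have h2 : ContinuousWithinAt (fun q : Euc d × ℝ => f p.1 q.2) (univ ×ˢ Icc 0 T) p := by
    have hsnd : ContinuousWithinAt (fun q : Euc d × ℝ => q.2) (univ ×ˢ Icc 0 T) p :=
      continuous_snd.continuousWithinAt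
    exact ContinuousWithinAt.comp (hcont p.1 p.2 hp2) hsnd (fun q hq => (mem_prod.mp hq).2)
  have h1 : Filter.Tendsto (fun q : Euc d × ℝ => f q.1 q.2 - f p.1 q.2)
      (nhdsWithin p (univ ×ˢ Icc 0 T)) (nhds 0) := by
    apply squeeze_zero_norm'
    · filter_upwards [self_mem_nhdsWithin] with q hq
      exact hlip q.1 p.1 q.2 (mem_prod.mp hq).2
    · have hcont2 : Continuous (fun q : Euc d × ℝ => L * ‖q.1 - p.1‖) :=
        continuous_const.mul ((continuous_fst.sub continuous_const).norm)
      have : Filter.Tendsto (fun q : Euc d × ℝ => L * ‖q.1 - p.1‖) (nhds p)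
          (nhds (L * ‖p.1 - p.1‖)) := hcont2.tendsto p
      rw [sub_self, norm_zero, mul_zero] at this
      exact this.mono_left nhdsWithin_le_nhds
  have hsum := h1.add h2
  rw [zero_add] at hsum
  have heq : (fun q : Euc d × ℝ => f q.1 q.2 - f p.1 q.2 + f p.1 q.2)
      = fun q : Euc d × ℝ => f q.1 q.2 := by
    funext q; rw [sub_add_cancel]
  rw [heq] at hsum
  exact hsum

/-- Theorem 2.2, universal approximation of SA-NODEs:
for `f` continuous in `t` and uniformly Lipschitz in `x`, any compact set `K` of initial data
and any `ε > 0`, there is an SA-NODE whose trajectories uniformly `ε`-approximate those of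
`ż = f(z,t)` on `[0,T]`. -/
theorem sa_node_universal_approximation
    (d : ℕ) (T : ℝ) (hT : 0 < T)
    (f : Euc d → ℝ → Euc d)
    (L : ℝ) (hL : 0 < L)
    (hcont : ∀ x, ContinuousOn (f x) (Icc 0 T))
    (hlip : ∀ x y : Euc d, ∀ t ∈ Icc (0:ℝ) T, ‖f x t - f y t‖ ≤ L * ‖x - y‖)
    (K : Set (Euc d)) (hK : IsCompact K)
    (ε : ℝ) (hε : 0 < ε) :
    ∃ (P : ℕ), 0 < P ∧
      ∃ (W : Fin P → Euc d) (A1 : Fin P → Matrix (Fin d) (Fin d) ℝ)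
        (A2 B : Fin P → Euc d),
        ∀ z₀ ∈ K, ∀ z x : ℝ → Euc d,
          z 0 = z₀ → x 0 = z₀ →
          (∀ t ∈ Icc (0:ℝ) T, HasDerivAt z (f (z t) t) t) →
          (∀ t ∈ Icc (0:ℝ) T, HasDerivAt x (saNode W A1 A2 B (x t) t) t) →
          ∀ t ∈ Icc (0:ℝ) T, ‖z t - x t‖ ≤ ε := by
  classical
  -- radius of K
  obtain ⟨RK, hRK⟩ := hK.isBounded.subset_closedBall 0
  -- bound on ‖f 0 t‖
  obtain ⟨M₀, hM₀⟩ := (isCompact_Icc : IsCompact (Icc (0:ℝ) T)).exists_bound_of_continuousOn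
    (hcont 0)
  set RK' : ℝ := max RK 0 with hRK'
  set M' : ℝ := max M₀ 0 with hM'
  have hRK'0 : 0 ≤ RK' := le_max_right _ _
  have hM'0 : 0 ≤ M' := le_max_right _ _
  have hexp1 : (1:ℝ) ≤ Real.exp (L * T) := Real.one_le_exp (by positivity)
  set R1 : ℝ := RK' * Real.exp (L * T) + (M' / L) * (Real.exp (L * T) - 1) with hR1
  have hR10 : 0 ≤ R1 := by
    have h1 : 0 ≤ RK' * Real.exp (L * T) := by positivity
    have h2 : 0 ≤ (M' / L) * (Real.exp (L * T) - 1) := by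
      apply mul_nonneg (by positivity); linarith
    rw [hR1]; linarith
  set R2 : ℝ := R1 + ε with hR2
  set δ' : ℝ := ε * L / (2 * Real.exp (L * T)) with hδ'
  have hδ'pos : 0 < δ' := by positivity
  -- approximate f on the tube
  set Q : Set (Euc d × ℝ) := Metric.closedBall (0 : Euc d) R2 ×ˢ Icc (0:ℝ) T with hQ
  have hQc : IsCompact Q := (isCompact_closedBall _ _).prod isCompact_Icc
  have hgc : ∀ j : Fin d, ContinuousOn (fun p : Euc d × ℝ => f p.1 p.2 j) Q := by
    intro j
    have hjoint := f_jointly_continuous f L hcont hlip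
    have hmono : ContinuousOn (fun p : Euc d × ℝ => f p.1 p.2) Q :=
      hjoint.mono (prod_mono (subset_univ _) Subset.rfl)
    exact (EuclideanSpace.proj (𝕜 := ℝ) j).continuous.comp_continuousOn hmono
  obtain ⟨P, hP, W, A1, A2, B, hnet⟩ :=
    net_approx Q hQc (fun p => f p.1 p.2) hgc δ' hδ'pos
  refine ⟨P, hP, W, A1, A2, B, ?_⟩
  intro z₀ hz₀ z x hz0 hx0 hz hx
  have hzc : ContinuousOn z (Icc 0 T) :=
    fun t ht => (hz t ht).continuousAt.continuousWithinAt
  have hxc : ContinuousOn x (Icc 0 T) :=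
    fun t ht => (hx t ht).continuousAt.continuousWithinAt
  -- a priori bound on z
  have hgbmono : ∀ t ∈ Icc (0:ℝ) T, gronwallBound RK' L M' t ≤ R1 := by
    intro t ht
    rw [gronwallBound_of_K_ne_0 (ne_of_gt hL)]
    have h1 : Real.exp (L * t) ≤ Real.exp (L * T) :=
      Real.exp_le_exp.mpr (by nlinarith [ht.2])
    have h2 : (1:ℝ) ≤ Real.exp (L * t) := Real.one_le_exp (by nlinarith [ht.1])
    rw [hR1]
    have hA : RK' * Real.exp (L * t) ≤ RK' * Real.exp (L * T) :=
      mul_le_mul_of_nonneg_left h1 hRK'0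
    have hB : M' / L * (Real.exp (L * t) - 1) ≤ M' / L * (Real.exp (L * T) - 1) :=
      mul_le_mul_of_nonneg_left (by linarith) (by positivity)
    linarith
  have hzbound : ∀ t ∈ Icc (0:ℝ) T, ‖z t‖ ≤ R1 := by
    have hgron := norm_le_gronwallBound_of_norm_deriv_right_le (f := z)
      (f' := fun t => f (z t) t) (δ := RK') (K := L) (ε := M') (a := 0) (b := T)
      hzc (fun t ht => (hz t (Ico_subset_Icc_self ht)).hasDerivWithinAt)
      (by
        rw [hz0]
        have := hRK hz₀
        rw [Metric.mem_closedBall, dist_zero_right] at this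
        exact le_trans this (le_max_left _ _))
      (by
        intro t ht
        have htm : t ∈ Icc (0:ℝ) T := Ico_subset_Icc_self ht
        have h1 : ‖f (z t) t - f 0 t‖ ≤ L * ‖z t - 0‖ := hlip (z t) 0 t htm
        have h2 : ‖f 0 t‖ ≤ M₀ := hM₀ t htm
        calc ‖f (z t) t‖ = ‖(f (z t) t - f 0 t) + f 0 t‖ := by rw [sub_add_cancel]
          _ ≤ ‖f (z t) t - f 0 t‖ + ‖f 0 t‖ := norm_add_le _ _
          _ ≤ L * ‖z t - 0‖ + M₀ := add_le_add h1 h2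
          _ ≤ L * ‖z t‖ + M' := by rw [sub_zero]; exact add_le_add le_rfl (le_max_left _ _))
    intro t ht
    have := hgron t ht
    rw [sub_zero] at this
    exact le_trans this (hgbmono t ht)
  -- Gronwall bound bookkeeping
  have hgb2 : ∀ t ∈ Icc (0:ℝ) T, gronwallBound 0 L (0 + δ') t ≤ ε / 2 := by
    intro t ht
    rw [zero_add, gronwallBound_of_K_ne_0 (ne_of_gt hL)]
    have h1 : Real.exp (L * t) ≤ Real.exp (L * T) :=
      Real.exp_le_exp.mpr (by nlinarith [ht.2])
    have heq : δ' / L = ε / (2 * Real.exp (L * T)) := by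
      rw [hδ']; field_simp
    show 0 * Real.exp (L * t) + δ' / L * (Real.exp (L * t) - 1) ≤ ε / 2
    rw [zero_mul, zero_add, heq]
    rw [div_mul_eq_mul_div, div_le_iff₀ (by positivity)]
    have hexp0 : 0 < Real.exp (L * T) := Real.exp_pos _
    nlinarith
  -- bootstrap set
  set S : Set ℝ := {t | t ∈ Icc (0:ℝ) T ∧ ∀ s ∈ Icc (0:ℝ) t, ‖z s - x s‖ ≤ ε} with hS
  have h0S : (0:ℝ) ∈ S := by
    refine ⟨⟨le_refl 0, hT.le⟩, ?_⟩
    intro s hs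
    have : s = 0 := le_antisymm hs.2 hs.1
    rw [this, hz0, hx0, sub_self, norm_zero]
    exact hε.le
  have hbddS : BddAbove S := ⟨T, fun t ht => ht.1.2⟩
  have hneS : S.Nonempty := ⟨0, h0S⟩
  set tstar : ℝ := sSup S with htstar
  have htsmem : tstar ∈ Icc (0:ℝ) T :=
    ⟨le_csSup hbddS h0S, csSup_le hneS (fun t ht => ht.1.2)⟩
  have hxin : ∀ s ∈ Ico (0:ℝ) tstar, ‖z s - x s‖ ≤ ε := by
    intro s hs
    obtain ⟨t, htS, hst⟩ := exists_lt_of_lt_csSup hneS hs.2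
    exact htS.2 s ⟨hs.1, hst.le⟩
  -- Gronwall comparison on [0, tstar]
  have hgron : ∀ t ∈ Icc (0:ℝ) tstar, ‖z t - x t‖ ≤ ε / 2 := by
    set v : ℝ → Euc d → Euc d := fun t y => f y (min (max t 0) T) with hv
    have hvlip : ∀ t, LipschitzWith ⟨L, hL.le⟩ (v t) := by
      intro t
      apply LipschitzWith.of_dist_le_mul
      intro y y'
      rw [dist_eq_norm, dist_eq_norm]
      have hcl : min (max t 0) T ∈ Icc (0:ℝ) T :=
        ⟨le_min (le_max_right t 0) hT.le, min_le_right _ _⟩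
      exact hlip y y' _ hcl
    have hsub : Icc (0:ℝ) tstar ⊆ Icc (0:ℝ) T := Icc_subset_Icc_right htsmem.2
    have hsub2 : Ico (0:ℝ) tstar ⊆ Icc (0:ℝ) T := fun s hs => ⟨hs.1, le_trans hs.2.le htsmem.2⟩
    have hclamp : ∀ t ∈ Ico (0:ℝ) tstar, min (max t 0) T = t := by
      intro t ht
      rw [max_eq_left ht.1, min_eq_left (le_trans ht.2.le htsmem.2)]
    have key := dist_le_of_approx_trajectories_ODE (v := v) (K := ⟨L, hL.le⟩)
      (f := z) (g := x) (f' := fun t => f (z t) t)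
      (g' := fun t => saNode W A1 A2 B (x t) t)
      (a := 0) (b := tstar) (εf := 0) (εg := δ') (δ := 0)
      hvlip
      (hzc.mono hsub)
      (fun t ht => (hz t (hsub2 ht)).hasDerivWithinAt)
      (by
        intro t ht
        rw [hv]
        simp only
        rw [hclamp t ht, dist_self])
      (hxc.mono hsub)
      (fun t ht => (hx t (hsub2 ht)).hasDerivWithinAt)
      (by
        intro t ht
        rw [hv]
        simp only
        rw [hclamp t ht]
        have hxt : ‖x t‖ ≤ R2 := by
          have h1 : ‖z t - x t‖ ≤ ε := hxin t ht
          have h2 : ‖z t‖ ≤ R1 := hzbound t (hsub2 ht)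
          calc ‖x t‖ = ‖z t - (z t - x t)‖ := by rw [sub_sub_cancel]
            _ ≤ ‖z t‖ + ‖z t - x t‖ := norm_sub_le _ _
            _ ≤ R1 + ε := add_le_add h2 h1
        have hmem : ((x t, t) : Euc d × ℝ) ∈ Q := by
          rw [hQ]
          refine mem_prod.mpr ⟨?_, hsub2 ht⟩
          rw [Metric.mem_closedBall, dist_zero_right]
          exact hxt
        have := hnet (x t, t) hmem
        rw [dist_comm, dist_eq_norm]
        exact this)
      (by rw [hz0, hx0, dist_self])
    intro t ht
    have h1 := key t ht
    rw [dist_eq_norm, sub_zero] at h1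
    refine le_trans h1 ?_
    exact hgb2 t (hsub ht)
  -- tstar = T
  have htT : tstar = T := by
    by_contra hne
    have hlt : tstar < T := lt_of_le_of_ne htsmem.2 hne
    have hphi : ‖z tstar - x tstar‖ ≤ ε / 2 := hgron tstar ⟨htsmem.1, le_refl _⟩
    have hφc : ContinuousAt (fun s => ‖z s - x s‖) tstar :=
      ((hz tstar htsmem).continuousAt.sub (hx tstar htsmem).continuousAt).norm
    have hev : ∀ᶠ s in nhds tstar, ‖z s - x s‖ < ε :=
      hφc.eventually_lt_const (by linarith)
    obtain ⟨η, hη, hball⟩ := Metric.eventually_nhds_iff.mp hev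
    set t1 : ℝ := min (tstar + η / 2) T with ht1
    have ht1mem : t1 ∈ Icc (0:ℝ) T :=
      ⟨le_min (by linarith [htsmem.1]) hT.le, min_le_right _ _⟩
    have ht1S : t1 ∈ S := by
      refine ⟨ht1mem, ?_⟩
      intro s hs
      rcases le_or_gt s tstar with h | h
      · exact le_trans (hgron s ⟨hs.1, h⟩) (by linarith)
      · refine (hball ?_).le
        rw [Real.dist_eq, abs_of_pos (by linarith)]
        have hs1 : s ≤ t1 := hs.2
        have hs2 : t1 ≤ tstar + η / 2 := min_le_left _ _
        linarith
    have hup : t1 ≤ tstar := le_csSup hbddS ht1S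
    have hdown : tstar < t1 := lt_min (by linarith) hlt
    linarith
  intro t ht
  rw [← htT] at ht
  exact le_trans (hgron t ht) (by linarith)
end
end

section
/- Let T > 0 and let f : ℝ^d × [0,T] → ℝ^d satisfy Assumption 1 with Lipschitz constant L. For s ∈ [0,T] let φ_s : ℝ^d → ℝ^d be the flow map sending z₀ to the time-s value of the solution of ż = f(z,t), z(0) = z₀. Then for every compact set K ⊆ ℝ^d, every s ∈ [0,T], and every measurable h : ℝ^d → [0,∞], one has ∫_K h(φ_s(z)) dz ≤ exp(s L d) ∫_{φ_s(K)} h(x) dx, where both integrals are with respect to Lebesgue measure. -/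
open MeasureTheory Set
open scoped NNReal ENNReal

noncomputable section

/-- change-of-variables estimate in Step 4 of the proof of Theorem 2.4:
for the flow `φ_s` of `ż = f(z,t)` with `f` `L`-Lipschitz in `x`, any compact `K`, any
`s ∈ [0,T]` and any measurable `h : ℝ^d → [0,∞]`,
`∫_K h(φ_s(z)) dz ≤ e^{sLd} ∫_{φ_s(K)} h(x) dx`. -/
theorem flow_change_of_variables
    (d : ℕ) (T L : ℝ) (hT : 0 < T) (hL : 0 < L)
    (f : Euc d → ℝ → Euc d)
    (hcont : ∀ x, ContinuousOn (f x) (Icc 0 T))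
    (hlip : ∀ x y : Euc d, ∀ t ∈ Icc (0:ℝ) T, ‖f x t - f y t‖ ≤ L * ‖x - y‖)
    (φ : ℝ → Euc d → Euc d)
    (hφ0 : ∀ z₀, φ 0 z₀ = z₀)
    (hφ : ∀ z₀, ∀ t ∈ Icc (0:ℝ) T, HasDerivAt (fun s => φ s z₀) (f (φ t z₀) t) t)
    (K : Set (Euc d)) (hK : IsCompact K)
    (s : ℝ) (hs : s ∈ Icc (0:ℝ) T)
    (h : Euc d → ENNReal) (hmeas : Measurable h) :
    (∫⁻ z in K, h (φ s z)) ≤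
      ENNReal.ofReal (Real.exp (s * L * d)) * ∫⁻ x in (φ s) '' K, h x := by
  obtain ⟨hs0, hsT⟩ := hs
  have hT0 : (0:ℝ) ≤ T := hT.le
  -- clamping to [0, T]
  set π : ℝ → ℝ := fun t => max 0 (min t T) with hπ
  have hπmem : ∀ t, π t ∈ Icc (0:ℝ) T := fun t =>
    ⟨le_max_left _ _, max_le hT0 (min_le_right _ _)⟩
  have hπeq : ∀ t ∈ Icc (0:ℝ) T, π t = t := fun t ht => by
    simp [hπ, min_eq_left ht.2, max_eq_right ht.1]
  set Ln : ℝ≥0 := ⟨L, hL.le⟩ with hLn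
  have hLnc : (Ln : ℝ) = L := rfl
  -- forward Lipschitz bound via Grönwall
  have hφcont : ∀ z₀, ContinuousOn (fun t => φ t z₀) (Icc 0 s) := fun z₀ t ht =>
    ((hφ z₀ t ⟨ht.1, ht.2.trans hsT⟩).continuousAt).continuousWithinAt
  have hvlip : ∀ t : ℝ, LipschitzWith Ln (fun x => f x (π t)) := fun t =>
    LipschitzWith.of_dist_le_mul fun x y => by
      have := hlip x y (π t) (hπmem t)
      simpa [dist_eq_norm, hLnc] using this
  have hf' : ∀ z₀, ∀ t ∈ Ico (0:ℝ) s,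
      HasDerivWithinAt (fun u => φ u z₀) (f (φ t z₀) (π t)) (Ici t) t := by
    intro z₀ t ht
    have htT : t ∈ Icc (0:ℝ) T := ⟨ht.1, ht.2.le.trans hsT⟩
    rw [hπeq t htT]
    exact (hφ z₀ t htT).hasDerivWithinAt
  have hfwd : ∀ z₀ z₁ : Euc d,
      dist (φ s z₀) (φ s z₁) ≤ dist z₀ z₁ * Real.exp (L * s) := by
    intro z₀ z₁
    have := dist_le_of_trajectories_ODE (v := fun t x => f x (π t)) hvlip
      (hφcont z₀) (hf' z₀) (hφcont z₁) (hf' z₁)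
      (by rw [hφ0, hφ0]) s ⟨hs0, le_rfl⟩
    simpa [hLnc] using this
  -- backward Lipschitz bound via Grönwall (time reversal)
  have hbmem : ∀ t ∈ Icc (0:ℝ) s, s - t ∈ Icc (0:ℝ) T := fun t ht =>
    ⟨by linarith [ht.2], by linarith [ht.1]⟩
  have hbcont : ∀ z, ContinuousOn (fun t => φ (s - t) z) (Icc 0 s) := by
    intro z t ht
    have := ((hφ z (s - t) (hbmem t ht)).continuousAt)
    have hc : ContinuousAt (fun u : ℝ => s - u) t := by fun_prop
    exact (this.comp hc).continuousWithinAt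
  have hb' : ∀ z, ∀ t ∈ Ico (0:ℝ) s,
      HasDerivWithinAt (fun u => φ (s - u) z)
        (-(f (φ (s - t) z) (π (s - t)))) (Ici t) t := by
    intro z t ht
    have hst : s - t ∈ Icc (0:ℝ) T := hbmem t ⟨ht.1, ht.2.le⟩
    have h1 := hφ z (s - t) hst
    have h2 : HasDerivAt (fun u : ℝ => s - u) (-1) t := by
      simpa using (hasDerivAt_id t).const_sub s
    have h3 := h1.scomp t h2
    rw [hπeq _ hst]
    have : ((-1 : ℝ) • f (φ (s - t) z) (s - t)) = -(f (φ (s - t) z) (s - t)) := by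
      simp
    rw [this] at h3
    exact h3.hasDerivWithinAt
  have hwlip : ∀ t : ℝ, LipschitzWith Ln (fun x => -(f x (π (s - t)))) := fun t =>
    LipschitzWith.of_dist_le_mul fun x y => by
      have := hlip x y (π (s - t)) (hπmem _)
      rw [dist_eq_norm, dist_eq_norm, hLnc]
      rw [neg_sub_neg, norm_sub_rev]
      exact this
  have hbwd : ∀ z₀ z₁ : Euc d,
      dist z₀ z₁ ≤ dist (φ s z₀) (φ s z₁) * Real.exp (L * s) := by
    intro z₀ z₁
    have := dist_le_of_trajectories_ODE (v := fun t x => -(f x (π (s - t)))) hwlip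
      (hbcont z₀) (hb' z₀) (hbcont z₁) (hb' z₁)
      (le_refl (dist (φ (s - 0) z₀) (φ (s - 0) z₁))) s ⟨hs0, le_rfl⟩
    simpa [hLnc, hφ0] using this
  -- Lipschitz and antilipschitz structure of φ s
  set C : ℝ≥0 := Real.toNNReal (Real.exp (L * s)) with hCdef
  have hCc : (C : ℝ) = Real.exp (L * s) := Real.coe_toNNReal _ (Real.exp_nonneg _)
  have hlipφ : LipschitzWith C (φ s) := LipschitzWith.of_dist_le_mul fun x y => by
    rw [hCc, mul_comm]; exact hfwd x y
  have hanti : AntilipschitzWith C (φ s) := AntilipschitzWith.of_le_mul_dist fun x y => by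
    rw [hCc, mul_comm]; exact hbwd x y
  have hmφ : Measurable (φ s) := hlipφ.continuous.measurable
  -- Hausdorff measure is a Haar measure, hence a multiple of volume
  haveI hinst : (μH[(d:ℝ)] : Measure (Euc d)).IsAddHaarMeasure := by
    have := MeasureTheory.isAddHaarMeasure_hausdorffMeasure (E := Euc d)
    rwa [finrank_euclideanSpace_fin] at this
  have hcvol : (μH[(d:ℝ)] : Measure (Euc d)) =
      (μH[(d:ℝ)] : Measure (Euc d)).addHaarScalarFactor (volume : Measure (Euc d)) •
        (volume : Measure (Euc d)) :=
    Measure.isAddLeftInvariant_eq_smul _ _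
  set c : ℝ≥0 := (μH[(d:ℝ)] : Measure (Euc d)).addHaarScalarFactor (volume : Measure (Euc d))
    with hcdef
  have hc0 : c ≠ 0 := by
    intro hc
    have h1 : (μH[(d:ℝ)] : Measure (Euc d)) univ ≠ 0 :=
      (isOpen_univ.measure_pos _ univ_nonempty).ne'
    rw [hcvol, hc] at h1
    simp at h1
  -- key measure estimate
  have key : ∀ E : Set (Euc d),
      volume E ≤ (C : ℝ≥0∞) ^ d * volume (φ s '' E) := by
    intro E
    have h1 := hanti.le_hausdorffMeasure_image (d := (d:ℝ)) (Nat.cast_nonneg d) E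
    rw [hcvol] at h1
    simp only [Measure.smul_apply, smul_eq_mul, ENNReal.rpow_natCast] at h1
    have h2 : (c : ℝ≥0∞) * volume E ≤
        (c : ℝ≥0∞) * ((C : ℝ≥0∞) ^ d * volume (φ s '' E)) := by
      calc (c : ℝ≥0∞) * volume E ≤ (C : ℝ≥0∞) ^ d * ((c : ℝ≥0∞) * volume (φ s '' E)) := h1
        _ = (c : ℝ≥0∞) * ((C : ℝ≥0∞) ^ d * volume (φ s '' E)) := by ring
    exact (ENNReal.mul_le_mul_iff_right (by exact_mod_cast hc0) ENNReal.coe_ne_top).mp h2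
  -- the pushforward measure bound
  have hle : Measure.map (φ s) (volume.restrict K) ≤
      ((C : ℝ≥0∞) ^ d) • (volume.restrict ((φ s) '' K)) := by
    rw [Measure.le_iff]
    intro A hA
    rw [Measure.map_apply hmφ hA, Measure.restrict_apply (hmφ hA),
      Measure.smul_apply, Measure.restrict_apply hA, smul_eq_mul]
    calc volume ((φ s) ⁻¹' A ∩ K)
        ≤ (C : ℝ≥0∞) ^ d * volume (φ s '' ((φ s) ⁻¹' A ∩ K)) := key _
      _ ≤ (C : ℝ≥0∞) ^ d * volume (A ∩ (φ s '' K)) := by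
          refine mul_le_mul_right (measure_mono ?_) _
          rintro x ⟨y, ⟨hyA, hyK⟩, rfl⟩
          exact ⟨hyA, ⟨y, hyK, rfl⟩⟩
  -- constant identification
  have hconst : (C : ℝ≥0∞) ^ d = ENNReal.ofReal (Real.exp (s * L * d)) := by
    have : (C : ℝ≥0∞) = ENNReal.ofReal (Real.exp (L * s)) := by
      rw [ENNReal.ofReal]
    rw [this, ← ENNReal.ofReal_pow (Real.exp_nonneg _)]
    congr 1
    rw [← Real.exp_nat_mul]
    ring_nf
  calc (∫⁻ z in K, h (φ s z))
      = ∫⁻ x, h x ∂(Measure.map (φ s) (volume.restrict K)) :=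
        (lintegral_map hmeas hmφ).symm
    _ ≤ ∫⁻ x, h x ∂(((C : ℝ≥0∞) ^ d) • (volume.restrict ((φ s) '' K))) :=
        lintegral_mono' hle le_rfl
    _ = (C : ℝ≥0∞) ^ d * ∫⁻ x in (φ s) '' K, h x := lintegral_smul_measure _ _
    _ = ENNReal.ofReal (Real.exp (s * L * d)) * ∫⁻ x in (φ s) '' K, h x := by
        rw [hconst]
end
end
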